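/- arXiv:2004.08643 — 5 statements merged into one kernel-verified Lean document; each statement's English description precedes it below -/
import Mathlib

section
/- Let $P, Q, R$ be real $n\times n$ matrices with $P$ symmetric and invertible and $R$ symmetric. Define the $2n\times 2n$ matrix $B = \begin{bmatrix} P^{-1} & -P^{-1}Q \\ -Q^T P^{-1} & Q^T P^{-1} Q - R \end{bmatrix}$ and let $J = \begin{bmatrix} 0 & -I \\ I & 0 \end{bmatrix}$ be the standard symplectic matrix. Then $JB$ is hyperbolic (i.e. has no purely imaginary eigenvalues, equivalently no eigenvalues on the imaginary axis) if and only if $\det\big[a^2 P + ia(Q^T - Q) + R\big] \neq 0$ for every $a \in \mathbb{R}$. -/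
open Matrix

private lemma auxblock {m : Type*} [Fintype m] [DecidableEq m] {α : Type*} [CommRing α]
    (Pc Qc Rc A : Matrix m m α) (z : α) (hA : A * Pc = 1) (hA2 : Pc * A = 1) :
    (Qcᵀ * A * Qc - Rc) - ((-(Qcᵀ * A)) - z • 1) * Pc * ((-(A * Qc)) + z • 1)
      = (z * z) • Pc + z • Qcᵀ - z • Qc - Rc := by
  have h3 : ∀ X : Matrix m m α, A * (Pc * X) = X := fun X => by
    rw [← Matrix.mul_assoc, hA, Matrix.one_mul]
  have h4 : ∀ X : Matrix m m α, Pc * (A * X) = X := fun X => by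
    rw [← Matrix.mul_assoc, hA2, Matrix.one_mul]
  simp only [Matrix.sub_mul, Matrix.mul_sub, Matrix.add_mul, Matrix.mul_add,
    Matrix.neg_mul, Matrix.mul_neg, Matrix.smul_mul, Matrix.mul_smul,
    Matrix.mul_assoc, h3, h4, hA, hA2, Matrix.mul_one, Matrix.one_mul,
    smul_smul]
  module

/-- Hyperbolicity criterion: `JB` is hyperbolic (no eigenvalues on the imaginary axis)
iff `det (a² P + i a (Qᵀ - Q) + R) ≠ 0` for all real `a`. -/
theorem stmt0 (n : ℕ) (P Q R : Matrix (Fin n) (Fin n) ℝ)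
    (hP : P.IsSymm) (hPinv : IsUnit P) (hR : R.IsSymm) :
    (∀ a : ℝ,
      ((((fromBlocks 0 (-1) 1 0 : Matrix (Fin n ⊕ Fin n) (Fin n ⊕ Fin n) ℝ) *
          fromBlocks P⁻¹ (-(P⁻¹ * Q)) (-(Qᵀ * P⁻¹)) (Qᵀ * P⁻¹ * Q - R)).map
            Complex.ofReal) +
        (a : ℂ) • Complex.I • (1 : Matrix (Fin n ⊕ Fin n) (Fin n ⊕ Fin n) ℂ)).det ≠ 0)
    ↔ (∀ a : ℝ,
      ((a : ℂ) ^ 2 • P.map Complex.ofReal +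
        (a : ℂ) • Complex.I • ((Qᵀ - Q).map Complex.ofReal) +
        R.map Complex.ofReal).det ≠ 0) := by
  have hdet : IsUnit P.det := (Matrix.isUnit_iff_isUnit_det P).mp hPinv
  set Pc : Matrix (Fin n) (Fin n) ℂ := P.map Complex.ofReal with hPcdef
  set Qc : Matrix (Fin n) (Fin n) ℂ := Q.map Complex.ofReal with hQcdef
  set Rc : Matrix (Fin n) (Fin n) ℂ := R.map Complex.ofReal with hRcdef
  set A : Matrix (Fin n) (Fin n) ℂ := (P⁻¹).map Complex.ofReal with hAdef
  -- basic map lemmas specialized to Complex.ofReal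
  have mmul : ∀ (M N : Matrix (Fin n) (Fin n) ℝ),
      (M * N).map Complex.ofReal = M.map Complex.ofReal * N.map Complex.ofReal :=
    fun M N => Matrix.map_mul (f := Complex.ofRealHom)
  have mneg : ∀ (M : Matrix (Fin n) (Fin n) ℝ),
      (-M).map Complex.ofReal = -(M.map Complex.ofReal) :=
    fun M => map_neg (Complex.ofRealHom.mapMatrix) M
  have msub : ∀ (M N : Matrix (Fin n) (Fin n) ℝ),
      (M - N).map Complex.ofReal = M.map Complex.ofReal - N.map Complex.ofReal :=
    fun M N => map_sub (Complex.ofRealHom.mapMatrix) M N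
  have mtrans : ∀ (M : Matrix (Fin n) (Fin n) ℝ),
      (Mᵀ).map Complex.ofReal = (M.map Complex.ofReal)ᵀ :=
    fun M => Matrix.transpose_map
  have hAP : A * Pc = 1 := by
    rw [hAdef, hPcdef, ← mmul, Matrix.nonsing_inv_mul P hdet,
      Matrix.map_one _ Complex.ofReal_zero Complex.ofReal_one]
  have hPA : Pc * A = 1 := by
    rw [hAdef, hPcdef, ← mmul, Matrix.mul_nonsing_inv P hdet,
      Matrix.map_one _ Complex.ofReal_zero Complex.ofReal_one]
  haveI : Invertible A := ⟨Pc, hPA, hAP⟩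
  have hinvA : ⅟A = Pc := invOf_eq_right_inv hAP
  have hdetA : A.det ≠ 0 := by
    have := congrArg Matrix.det hAP
    rw [Matrix.det_mul, Matrix.det_one] at this
    exact left_ne_zero_of_mul_eq_one this
  set Jc : Matrix (Fin n ⊕ Fin n) (Fin n ⊕ Fin n) ℂ := fromBlocks 0 (-1) 1 0 with hJcdef
  have hJJ : Jc * Jc = -1 := by
    rw [hJcdef, Matrix.fromBlocks_multiply]
    simp [← Matrix.fromBlocks_one, Matrix.fromBlocks_neg]
  have hdetJ : Jc.det ≠ 0 := by
    have h1 : Jc.det * Jc.det = ((-1 : Matrix (Fin n ⊕ Fin n) (Fin n ⊕ Fin n) ℂ)).det := by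
      rw [← Matrix.det_mul, hJJ]
    have h2 : ((-1 : Matrix (Fin n ⊕ Fin n) (Fin n ⊕ Fin n) ℂ)).det ≠ 0 := by
      rw [show (-1 : Matrix (Fin n ⊕ Fin n) (Fin n ⊕ Fin n) ℂ) = -(1 : Matrix _ _ ℂ) from rfl,
        Matrix.det_neg, Matrix.det_one, mul_one]
      exact pow_ne_zero _ (neg_ne_zero.mpr one_ne_zero)
    intro h
    rw [h, mul_zero] at h1
    exact h2 h1.symm
  have hJmap : (fromBlocks 0 (-1) 1 0 : Matrix (Fin n ⊕ Fin n) (Fin n ⊕ Fin n) ℝ).map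
      Complex.ofReal = Jc := by
    rw [hJcdef]
    ext (i | i) (j | j) <;>
      simp [Matrix.map_apply, Matrix.one_apply, apply_ite Complex.ofReal]
  have key : ∀ a : ℝ,
      ((((fromBlocks 0 (-1) 1 0 : Matrix (Fin n ⊕ Fin n) (Fin n ⊕ Fin n) ℝ) *
          fromBlocks P⁻¹ (-(P⁻¹ * Q)) (-(Qᵀ * P⁻¹)) (Qᵀ * P⁻¹ * Q - R)).map
            Complex.ofReal) +
        (a : ℂ) • Complex.I • (1 : Matrix (Fin n ⊕ Fin n) (Fin n ⊕ Fin n) ℂ)).det ≠ 0 ↔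
      ((((-a : ℝ)) : ℂ) ^ 2 • P.map Complex.ofReal +
        (((-a : ℝ)) : ℂ) • Complex.I • ((Qᵀ - Q).map Complex.ofReal) +
        R.map Complex.ofReal).det ≠ 0 := by
    intro a
    set z : ℂ := (a : ℂ) * Complex.I with hzdef
    have hz2 : z * z = -((a : ℂ) ^ 2) := by
      rw [hzdef, mul_mul_mul_comm, Complex.I_mul_I]; ring
    set Bm : Matrix (Fin n ⊕ Fin n) (Fin n ⊕ Fin n) ℂ :=
      (fromBlocks P⁻¹ (-(P⁻¹ * Q)) (-(Qᵀ * P⁻¹)) (Qᵀ * P⁻¹ * Q - R)).map Complex.ofReal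
      with hBmdef
    have hsplit :
        (((fromBlocks 0 (-1) 1 0 : Matrix (Fin n ⊕ Fin n) (Fin n ⊕ Fin n) ℝ) *
          fromBlocks P⁻¹ (-(P⁻¹ * Q)) (-(Qᵀ * P⁻¹)) (Qᵀ * P⁻¹ * Q - R)).map
            Complex.ofReal) +
        (a : ℂ) • Complex.I • (1 : Matrix (Fin n ⊕ Fin n) (Fin n ⊕ Fin n) ℂ)
        = Jc * (Bm - z • Jc) := by
      rw [show ((fromBlocks 0 (-1) 1 0 : Matrix (Fin n ⊕ Fin n) (Fin n ⊕ Fin n) ℝ) *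
          fromBlocks P⁻¹ (-(P⁻¹ * Q)) (-(Qᵀ * P⁻¹)) (Qᵀ * P⁻¹ * Q - R)).map Complex.ofReal
          = (fromBlocks 0 (-1) 1 0 : Matrix (Fin n ⊕ Fin n) (Fin n ⊕ Fin n) ℝ).map
              Complex.ofReal * Bm from Matrix.map_mul (f := Complex.ofRealHom), hJmap,
        Matrix.mul_sub, Matrix.mul_smul, hJJ]
      rw [smul_neg, sub_neg_eq_add, smul_smul]
    have hblocks : Bm - z • Jc =
        fromBlocks A ((-(A * Qc)) + z • 1) ((-(Qcᵀ * A)) - z • 1) (Qcᵀ * A * Qc - Rc) := by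
      rw [hBmdef, hJcdef, Matrix.fromBlocks_map, Matrix.fromBlocks_smul, sub_eq_add_neg,
        Matrix.fromBlocks_neg, Matrix.fromBlocks_add]
      simp only [mmul, mneg, msub, mtrans]
      congr 1 <;> simp [hAdef, hQcdef, hRcdef, sub_eq_add_neg, Matrix.mul_assoc]
    have hschur : (Bm - z • Jc).det = A.det * ((z * z) • Pc + z • Qcᵀ - z • Qc - Rc).det := by
      rw [hblocks, Matrix.det_fromBlocks₁₁, hinvA, auxblock Pc Qc Rc A z hAP hPA]
    have hfin : ((z * z) • Pc + z • Qcᵀ - z • Qc - Rc)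
        = -((((-a : ℝ)) : ℂ) ^ 2 • Pc + (((-a : ℝ)) : ℂ) • Complex.I • (Qcᵀ - Qc) + Rc) := by
      rw [hz2]
      push_cast
      module
    rw [hsplit, Matrix.det_mul, hschur, hfin]
    have hQQ : (Qᵀ - Q).map Complex.ofReal = Qcᵀ - Qc := by rw [msub, mtrans]
    rw [hQQ, Matrix.det_neg]
    constructor
    · intro h hc
      exact h (by rw [hc]; ring)
    · intro h hc
      rcases mul_eq_zero.mp hc with h1 | h1
      · exact hdetJ h1
      rcases mul_eq_zero.mp h1 with h2 | h2
      · exact hdetA h2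
      rcases mul_eq_zero.mp h2 with h3 | h3
      · exact pow_ne_zero _ (neg_ne_zero.mpr (one_ne_zero : (1:ℂ) ≠ 0)) h3
      · exact h h3
  constructor
  · intro h a
    have := (key (-a)).mp (h (-a))
    simpa using this
  · intro h a
    exact (key a).mpr (h (-a))
end

section
/- Let $P, Q, R$ be real $n\times n$ matrices with $P, R$ symmetric and $P$ invertible, and suppose the symmetric $2n\times 2n$ block matrix $\begin{bmatrix} P & Q \\ Q^T & R \end{bmatrix}$ is positive definite. Then the matrix $JB$ is hyperbolic, where $B = \begin{bmatrix} P^{-1} & -P^{-1}Q \\ -Q^T P^{-1} & Q^T P^{-1} Q - R \end{bmatrix}$ and $J = \begin{bmatrix} 0 & -I \\ I & 0 \end{bmatrix}$. -/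
open Matrix
open scoped ComplexOrder

lemma conjT_map {m k : Type*} (A : Matrix m k ℝ) :
    (A.map Complex.ofReal)ᴴ = Aᵀ.map Complex.ofReal := by
  ext i j
  simp [Matrix.conjTranspose_apply, Complex.conj_ofReal]

lemma map_mulC {m k l : Type*} [Fintype k] (A : Matrix m k ℝ) (B : Matrix k l ℝ) :
    (A * B).map Complex.ofReal = A.map Complex.ofReal * B.map Complex.ofReal :=
  Matrix.map_mul (f := Complex.ofRealHom)

lemma herm_dot_real {m : Type*} [Fintype m] {M : Matrix m m ℂ} (hM : M.IsHermitian)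
    (x : m → ℂ) : ((starRingEnd ℂ) (star x ⬝ᵥ M *ᵥ x)) = star x ⬝ᵥ M *ᵥ x := by
  calc (starRingEnd ℂ) (star x ⬝ᵥ M *ᵥ x) = star (star x ⬝ᵥ M *ᵥ x) :=
        congrFun RCLike.star_def.symm _
  _ = star (M *ᵥ x) ⬝ᵥ star (star x) := by
        rw [star_dotProduct_star]
  _ = (star x ᵥ* Mᴴ) ⬝ᵥ x := by rw [star_star, star_mulVec]
  _ = star x ⬝ᵥ M *ᵥ x := by rw [hM.eq, ← dotProduct_mulVec]

lemma posDef_map {m : Type*} [Fintype m] {A : Matrix m m ℝ} (hA : A.PosDef) :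
    (A.map Complex.ofReal).PosDef := by
  have hsym : Aᵀ = A := hA.isHermitian
  have hherm : (A.map Complex.ofReal).IsHermitian := by
    rw [Matrix.IsHermitian, conjT_map, hsym]
  refine posDef_iff_dotProduct_mulVec.mpr ⟨hherm, fun x hx => ?_⟩
  have him : (star x ⬝ᵥ (A.map Complex.ofReal) *ᵥ x).im = 0 := by
    have := herm_dot_real hherm x
    rw [Complex.conj_eq_iff_im] at this
    exact this
  have hre : (star x ⬝ᵥ (A.map Complex.ofReal) *ᵥ x).re
      = (fun i => (x i).re) ⬝ᵥ A *ᵥ (fun i => (x i).re)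
      + (fun i => (x i).im) ⬝ᵥ A *ᵥ (fun i => (x i).im) := by
    simp only [dotProduct, mulVec, Pi.star_apply, Matrix.map_apply, Finset.mul_sum,
      Complex.re_sum, Complex.mul_re, Complex.mul_im, Complex.ofReal_re, Complex.ofReal_im,
      RCLike.star_def, Complex.conj_re, Complex.conj_im, ← Finset.sum_add_distrib]
    exact Finset.sum_congr rfl fun i _ => Finset.sum_congr rfl fun j _ => by ring
  have hxx : (fun i => (x i).re) ≠ 0 ∨ (fun i => (x i).im) ≠ 0 := by
    by_contra h
    push_neg at h
    apply hx
    funext i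
    have h1 := congrFun h.1 i
    have h2 := congrFun h.2 i
    simp only [Pi.zero_apply] at h1 h2 ⊢
    exact Complex.ext h1 h2
  have hpos : 0 < (star x ⬝ᵥ (A.map Complex.ofReal) *ᵥ x).re := by
    rw [hre]
    rcases hxx with h | h
    · exact add_pos_of_pos_of_nonneg (by have := hA.dotProduct_mulVec_pos h; rwa [star_trivial] at this) (by have := hA.posSemidef.dotProduct_mulVec_nonneg (fun i => (x i).im); rwa [star_trivial] at this)
    · exact add_pos_of_nonneg_of_pos (by have := hA.posSemidef.dotProduct_mulVec_nonneg (fun i => (x i).re); rwa [star_trivial] at this) (by have := hA.dotProduct_mulVec_pos h; rwa [star_trivial] at this)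
  rw [Complex.lt_def]
  exact ⟨by simpa using hpos, by simp [him]⟩

/-- If the block matrix `[[P, Q], [Qᵀ, R]]` is positive definite, then `JB` is hyperbolic. -/
theorem stmt1 (n : ℕ) (P Q R : Matrix (Fin n) (Fin n) ℝ)
    (hP : P.IsSymm) (hR : R.IsSymm) (hPinv : IsUnit P)
    (hpos : (fromBlocks P Q Qᵀ R).PosDef) :
    ∀ a : ℝ,
      ((((fromBlocks 0 (-1) 1 0 : Matrix (Fin n ⊕ Fin n) (Fin n ⊕ Fin n) ℝ) *
          fromBlocks P⁻¹ (-(P⁻¹ * Q)) (-(Qᵀ * P⁻¹)) (Qᵀ * P⁻¹ * Q - R)).map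
            Complex.ofReal) +
        (a : ℂ) • Complex.I • (1 : Matrix (Fin n ⊕ Fin n) (Fin n ⊕ Fin n) ℂ)).det ≠ 0 := by
  intro a
  set c : ℂ := (a : ℂ) * Complex.I with hc
  have hcc : c * c = -((a : ℂ) ^ 2) := by
    rw [hc, mul_mul_mul_comm, Complex.I_mul_I]; ring
  have hdetP : IsUnit P.det := (Matrix.isUnit_iff_isUnit_det P).mp hPinv
  have hPP : P * P⁻¹ = 1 := Matrix.mul_nonsing_inv P hdetP
  have hPP' : P⁻¹ * P = 1 := Matrix.nonsing_inv_mul P hdetP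
  set P' : Matrix (Fin n) (Fin n) ℂ := P.map Complex.ofReal with hP'
  set Q' : Matrix (Fin n) (Fin n) ℂ := Q.map Complex.ofReal with hQ'
  set R' : Matrix (Fin n) (Fin n) ℂ := R.map Complex.ofReal with hR'
  set P₁ : Matrix (Fin n) (Fin n) ℂ := P⁻¹.map Complex.ofReal with hP₁
  have hQT : (Qᵀ).map Complex.ofReal = Q'ᵀ := by rw [hQ', Matrix.transpose_map]
  have h1 : P' * P₁ = 1 := by
    rw [hP', hP₁, ← map_mulC, hPP, Matrix.map_one _ Complex.ofReal_zero Complex.ofReal_one]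
  have h2 : P₁ * P' = 1 := by
    rw [hP', hP₁, ← map_mulC, hPP', Matrix.map_one _ Complex.ofReal_zero Complex.ofReal_one]
  have mneg : ∀ (U : Matrix (Fin n) (Fin n) ℝ),
      (-U).map Complex.ofReal = -(U.map Complex.ofReal) := by
    intro U; ext i j; simp
  have msub : ∀ (U V : Matrix (Fin n) (Fin n) ℝ),
      (U - V).map Complex.ofReal = U.map Complex.ofReal - V.map Complex.ofReal := by
    intro U V; ext i j; simp
  set Jc : Matrix (Fin n ⊕ Fin n) (Fin n ⊕ Fin n) ℂ := fromBlocks 0 (-1) 1 0 with hJc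
  have hJJ : Jc * Jc = -1 := by
    rw [hJc, Matrix.fromBlocks_multiply]
    have : fromBlocks (-1) 0 0 (-1) = -(1 : Matrix (Fin n ⊕ Fin n) (Fin n ⊕ Fin n) ℂ) := by
      rw [← fromBlocks_one, Matrix.fromBlocks_neg]; norm_num
    rw [← this]
    norm_num
  set X : Matrix (Fin n) (Fin n) ℂ := c • 1 - P₁ * Q' with hX
  set Y : Matrix (Fin n) (Fin n) ℂ := -(Q'ᵀ * P₁) - c • 1 with hY
  set Z : Matrix (Fin n) (Fin n) ℂ := Q'ᵀ * P₁ * Q' - R' with hZ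
  set M : Matrix (Fin n) (Fin n) ℂ := ((a : ℂ) ^ 2) • P' + R' + c • (Q' - Q'ᵀ) with hM
  have hgoal : (((fromBlocks 0 (-1) 1 0 : Matrix (Fin n ⊕ Fin n) (Fin n ⊕ Fin n) ℝ) *
          fromBlocks P⁻¹ (-(P⁻¹ * Q)) (-(Qᵀ * P⁻¹)) (Qᵀ * P⁻¹ * Q - R)).map
            Complex.ofReal) +
        (a : ℂ) • Complex.I • (1 : Matrix (Fin n ⊕ Fin n) (Fin n ⊕ Fin n) ℂ)
      = Jc * fromBlocks P₁ X Y Z := by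
    rw [Matrix.fromBlocks_multiply, hJc, Matrix.fromBlocks_multiply]
    simp only [Matrix.zero_mul, Matrix.mul_zero, zero_mul, mul_zero, neg_one_mul,
      Matrix.one_mul, one_mul, zero_add, add_zero, neg_neg]
    rw [Matrix.fromBlocks_map, smul_smul, ← hc, ← fromBlocks_one, Matrix.fromBlocks_smul,
      Matrix.fromBlocks_add, Matrix.fromBlocks_inj]
    refine ⟨?_, ?_, ?_, ?_⟩
    · rw [map_mulC, hQT, ← hP₁, hY]; abel
    · rw [mneg, msub, map_mulC, map_mulC, hQT, ← hP₁, ← hQ', ← hR', hZ]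
      simp only [smul_zero, add_zero]
    · rw [← hP₁]; simp only [smul_zero, add_zero]
    · rw [mneg, map_mulC, ← hP₁, ← hQ', hX]; abel
  rw [hgoal, Matrix.det_mul]
  have hdetJ : Jc.det ≠ 0 := by
    intro h
    have := congrArg Matrix.det hJJ
    rw [Matrix.det_mul, h, mul_zero, Matrix.det_neg, Matrix.det_one, mul_one] at this
    exact pow_ne_zero _ (by norm_num : (-1 : ℂ) ≠ 0) this.symm
  letI : Invertible P₁ := ⟨P', h1, h2⟩
  rw [Matrix.det_fromBlocks₁₁ P₁ X Y Z]
  have hinv : ⅟P₁ = P' := rfl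
  rw [hinv]
  have e3 : P' * (P₁ * Q') = Q' := by rw [← Matrix.mul_assoc, h1, Matrix.one_mul]
  have ha2 : ((a : ℂ) ^ 2) • P' = (-(c * c)) • P' := by rw [hcc, neg_neg]
  have hschur : Z - Y * P' * X = -M := by
    rw [hZ, hY, hX, hM, ha2]
    simp only [Matrix.sub_mul, Matrix.mul_sub, Matrix.neg_mul, Matrix.mul_neg,
      smul_mul_assoc, mul_smul_comm, Matrix.one_mul, Matrix.mul_one, Matrix.mul_assoc,
      h2, e3, smul_smul]
    module
  rw [hschur, Matrix.det_neg]
  have hdetP₁ : P₁.det ≠ 0 := by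
    intro h
    have := congrArg Matrix.det h2
    rw [Matrix.det_mul, h, zero_mul, Matrix.det_one] at this
    exact zero_ne_one this
  -- M is positive definite
  have hE : ((fromBlocks P Q Qᵀ R).map Complex.ofReal).PosDef := posDef_map hpos
  have hEblocks : (fromBlocks P Q Qᵀ R).map Complex.ofReal = fromBlocks P' Q' Q'ᵀ R' := by
    rw [Matrix.fromBlocks_map, hQT, ← hP', ← hQ', ← hR']
  rw [hEblocks] at hE
  have hMherm : M.IsHermitian := by
    have hPH : P'ᴴ = P' := by rw [hP', conjT_map, hP.eq]
    have hRH : R'ᴴ = R' := by rw [hR', conjT_map, hR.eq]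
    have hQH : Q'ᴴ = Q'ᵀ := by rw [hQ', conjT_map, Matrix.transpose_map]
    have hQTH : (Q'ᵀ)ᴴ = Q' := by
      rw [hQ']; ext i j; simp [Matrix.conjTranspose_apply, Complex.conj_ofReal]
    have hstarc : star c = -c := by
      rw [hc]; simp [Complex.conj_ofReal]
    rw [Matrix.IsHermitian, hM]
    rw [conjTranspose_add, conjTranspose_add, conjTranspose_smul, conjTranspose_smul,
      conjTranspose_sub, hPH, hRH, hQH, hQTH, hstarc]
    have : star ((a : ℂ) ^ 2) = (a : ℂ) ^ 2 := by
      simp [Complex.conj_ofReal]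
    rw [this]
    module
  have hMpos : M.PosDef := by
    refine posDef_iff_dotProduct_mulVec.mpr ⟨hMherm, fun x hx => ?_⟩
    set w : (Fin n ⊕ Fin n) → ℂ := Sum.elim ((-c) • x) x with hw
    have hwne : w ≠ 0 := by
      intro h0
      apply hx
      funext i
      exact congrFun h0 (Sum.inr i)
    have hkey : star w ⬝ᵥ (fromBlocks P' Q' Q'ᵀ R') *ᵥ w = star x ⬝ᵥ M *ᵥ x := by
      have hstarw : star w = Sum.elim (c • star x) (star x) := by
        funext i
        cases i with
        | inl i => simp [hw, hc, Complex.conj_ofReal]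
        | inr i => simp [hw]
      rw [hw, Matrix.fromBlocks_mulVec, hstarw, sumElim_dotProduct_sumElim, hM]
      simp only [Sum.elim_comp_inl, Sum.elim_comp_inr, Matrix.mulVec_smul, Matrix.add_mulVec,
        Matrix.smul_mulVec, Matrix.sub_mulVec, dotProduct_add, dotProduct_smul,
        smul_dotProduct, dotProduct_sub, smul_eq_mul, smul_smul]
      ring_nf
      simp only [sq c, hcc]
      ring
    have := hE.dotProduct_mulVec_pos hwne
    rw [hkey] at this
    exact this
  have hdetM : M.det ≠ 0 := hMpos.det_pos.ne'
  exact mul_ne_zero hdetJ (mul_ne_zero hdetP₁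
    (mul_ne_zero (pow_ne_zero _ (by norm_num : (-1 : ℂ) ≠ 0)) hdetM))
end

section
/- Let $P$ be a real symmetric invertible $n\times n$ matrix and $Q$ any real $n\times n$ matrix. Then there exists $\widehat\lambda > 0$ such that for every $\lambda > \widehat\lambda$ and every $a\in\mathbb{R}$, the matrix $a^2 P + ia(Q^T - Q) + \lambda P = (a^2+\lambda)P\big[I + \tfrac{ia}{a^2+\lambda}P^{-1}(Q^T-Q)\big]$ is invertible. Consequently, setting $R_\lambda = \lambda P$, the matrix $JB_\lambda$ with $B_\lambda = \begin{bmatrix} P^{-1} & -P^{-1}Q \\ -Q^T P^{-1} & Q^T P^{-1} Q - \lambda P \end{bmatrix}$ is hyperbolic for all $\lambda > \widehat\lambda$. -/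
open Matrix Complex

attribute [local instance] Matrix.linftyOpNormedRing Matrix.linftyOpNormedAlgebra

section helpers
variable {n : ℕ}

lemma mapC_mul (A B : Matrix (Fin n) (Fin n) ℝ) :
    (A * B).map Complex.ofReal = A.map Complex.ofReal * B.map Complex.ofReal :=
  Matrix.map_mul (L := A) (M := B) (f := Complex.ofRealHom)

lemma mapC_smul (r : ℝ) (A : Matrix (Fin n) (Fin n) ℝ) :
    (r • A).map Complex.ofReal = (r : ℂ) • A.map Complex.ofReal := by
  ext i j; simp

lemma mapC_sub (A B : Matrix (Fin n) (Fin n) ℝ) :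
    (A - B).map Complex.ofReal = A.map Complex.ofReal - B.map Complex.ofReal := by
  ext i j; simp

lemma mapC_neg (A : Matrix (Fin n) (Fin n) ℝ) :
    (-A).map Complex.ofReal = -(A.map Complex.ofReal) := by
  ext i j; simp

lemma mapC_one : (1 : Matrix (Fin n) (Fin n) ℝ).map Complex.ofReal = 1 :=
  Matrix.map_one _ Complex.ofReal_zero Complex.ofReal_one

end helpers

lemma key (n : ℕ) (K : Matrix (Fin n) (Fin n) ℂ) :
    ∃ lam₀ : ℝ, 0 < lam₀ ∧ ∀ lam : ℝ, lam₀ < lam → ∀ a : ℝ,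
      IsUnit (((a : ℂ) ^ 2 + lam) • (1 : Matrix (Fin n) (Fin n) ℂ) +
        ((a : ℂ) * Complex.I) • K) := by
  haveI : CompleteSpace (Matrix (Fin n) (Fin n) ℂ) := by infer_instance
  refine ⟨‖K‖ ^ 2 + 1, by positivity, fun lam hlam a => ?_⟩
  have hs : (0:ℝ) < a ^ 2 + lam := by nlinarith [sq_nonneg a, norm_nonneg K]
  have hcast : ((a:ℂ)^2 + lam) = ((a^2 + lam : ℝ) : ℂ) := by push_cast; ring
  have hs' : ((a:ℂ)^2 + lam) ≠ 0 := by
    rw [hcast]; exact_mod_cast hs.ne'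
  set c : ℂ := ((a:ℂ) * Complex.I) / ((a:ℂ)^2 + lam) with hc
  have hnorm : ‖c • K‖ < 1 := by
    rw [norm_smul]
    have hcn : ‖c‖ = |a| / (a^2 + lam) := by
      rw [hc, hcast, norm_div, norm_mul, Complex.norm_I, mul_one, Complex.norm_real,
        Complex.norm_real, Real.norm_eq_abs, Real.norm_eq_abs, abs_of_pos hs]
    have hlt : |a| * ‖K‖ < a^2 + lam := by
      nlinarith [abs_nonneg a, norm_nonneg K, _root_.sq_abs a, sq_nonneg (|a| - ‖K‖)]
    rw [hcn, div_mul_eq_mul_div, div_lt_one hs]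
    exact hlt
  have hu : IsUnit (1 + c • K) := by
    have := isUnit_one_sub_of_norm_lt_one (x := -(c • K)) (by rwa [norm_neg])
    rwa [sub_neg_eq_add] at this
  have hfac : ((a:ℂ)^2+lam) • (1 : Matrix (Fin n) (Fin n) ℂ) + ((a:ℂ)*Complex.I) • K =
      (((a:ℂ)^2+lam) • (1 : Matrix (Fin n) (Fin n) ℂ)) * (1 + c • K) := by
    rw [smul_mul_assoc, one_mul, smul_add, smul_smul, mul_div_cancel₀ _ hs']
  rw [hfac]
  have h1 : IsUnit (((a:ℂ)^2+lam) • (1 : Matrix (Fin n) (Fin n) ℂ)) := by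
    rw [← Algebra.algebraMap_eq_smul_one]
    exact hs'.isUnit.map (algebraMap ℂ (Matrix (Fin n) (Fin n) ℂ))
  exact h1.mul hu

lemma part1eq (n : ℕ) (P Q : Matrix (Fin n) (Fin n) ℝ) (hPinv : IsUnit P) (lam a : ℝ) :
    (a : ℂ) ^ 2 • P.map Complex.ofReal +
      (a : ℂ) • Complex.I • ((Qᵀ - Q).map Complex.ofReal) +
      (lam : ℂ) • P.map Complex.ofReal =
    P.map Complex.ofReal * (((a : ℂ) ^ 2 + lam) • (1 : Matrix (Fin n) (Fin n) ℂ) +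
        ((a : ℂ) * Complex.I) • ((P⁻¹ * (Qᵀ - Q)).map Complex.ofReal)) := by
  have hPS : P * (P⁻¹ * (Qᵀ - Q)) = Qᵀ - Q := by
    rw [← Matrix.mul_assoc, Matrix.mul_nonsing_inv P ((Matrix.isUnit_iff_isUnit_det P).mp hPinv),
      Matrix.one_mul]
  have hmap : P.map Complex.ofReal * ((P⁻¹ * (Qᵀ - Q)).map Complex.ofReal)
      = (Qᵀ - Q).map Complex.ofReal := by
    have h2 : (P * (P⁻¹ * (Qᵀ - Q))).map Complex.ofReal = (Qᵀ - Q).map Complex.ofReal := by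
      rw [hPS]
    rw [← h2]
    exact (mapC_mul _ _).symm
  rw [Matrix.mul_add, Matrix.mul_smul, Matrix.mul_smul, Matrix.mul_one, hmap, smul_smul,
    add_smul]
  abel

/-- For `P` symmetric invertible and `R_λ = λP`, there is `λ̂ > 0` such that for all `λ > λ̂`
and all real `a` the matrix `a²P + ia(Qᵀ-Q) + λP` is invertible; consequently the Hamiltonian
matrix `JB_λ` is hyperbolic for all `λ > λ̂`. -/
theorem stmt7 (n : ℕ) (P Q : Matrix (Fin n) (Fin n) ℝ)
    (hP : P.IsSymm) (hPinv : IsUnit P) :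
    ∃ lam₀ : ℝ, 0 < lam₀ ∧ ∀ lam : ℝ, lam₀ < lam →
      (∀ a : ℝ,
        IsUnit ((a : ℂ) ^ 2 • P.map Complex.ofReal +
          (a : ℂ) • Complex.I • ((Qᵀ - Q).map Complex.ofReal) +
          (lam : ℂ) • P.map Complex.ofReal)) ∧
      (∀ a : ℝ,
        ((((fromBlocks 0 (-1) 1 0 : Matrix (Fin n ⊕ Fin n) (Fin n ⊕ Fin n) ℝ) *
            fromBlocks P⁻¹ (-(P⁻¹ * Q)) (-(Qᵀ * P⁻¹))
              (Qᵀ * P⁻¹ * Q - lam • P)).map Complex.ofReal) +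
          (a : ℂ) • Complex.I • (1 : Matrix (Fin n ⊕ Fin n) (Fin n ⊕ Fin n) ℂ)).det ≠ 0) := by
  have hPd : IsUnit P.det := (Matrix.isUnit_iff_isUnit_det P).mp hPinv
  obtain ⟨lam₀, hlam₀, hkey⟩ := key n ((P⁻¹ * (Qᵀ - Q)).map Complex.ofReal)
  refine ⟨lam₀, hlam₀, fun lam hlam => ?_⟩
  have hPmapU : IsUnit (P.map Complex.ofReal) := by
    have := hPinv.map (Complex.ofRealHom.mapMatrix (m := Fin n))
    exact this
  have part1 : ∀ a : ℝ,
      IsUnit ((a : ℂ) ^ 2 • P.map Complex.ofReal +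
        (a : ℂ) • Complex.I • ((Qᵀ - Q).map Complex.ofReal) +
        (lam : ℂ) • P.map Complex.ofReal) := by
    intro a
    rw [part1eq n P Q hPinv lam a]
    exact hPmapU.mul (hkey lam hlam a)
  refine ⟨part1, fun a => ?_⟩
  -- notation
  set p : Matrix (Fin n) (Fin n) ℂ := P.map Complex.ofReal with hp
  set pinv : Matrix (Fin n) (Fin n) ℂ := P⁻¹.map Complex.ofReal with hpinv
  set q : Matrix (Fin n) (Fin n) ℂ := Q.map Complex.ofReal with hq
  set qt : Matrix (Fin n) (Fin n) ℂ := Qᵀ.map Complex.ofReal with hqt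
  have hpinvp : pinv * p = 1 := by
    rw [hpinv, hp, ← mapC_mul, Matrix.nonsing_inv_mul P hPd, mapC_one]
  have hppinv : p * pinv = 1 := by
    rw [hpinv, hp, ← mapC_mul, Matrix.mul_nonsing_inv P hPd, mapC_one]
  set c : ℂ := (a : ℂ) * Complex.I with hcdef
  -- the complex matrix under the determinant, as blocks
  have hJB : (fromBlocks 0 (-1) 1 0 : Matrix (Fin n ⊕ Fin n) (Fin n ⊕ Fin n) ℝ) *
      fromBlocks P⁻¹ (-(P⁻¹ * Q)) (-(Qᵀ * P⁻¹)) (Qᵀ * P⁻¹ * Q - lam • P) =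
      fromBlocks (Qᵀ * P⁻¹) (lam • P - Qᵀ * P⁻¹ * Q) P⁻¹ (-(P⁻¹ * Q)) := by
    rw [Matrix.fromBlocks_multiply]
    simp
  have hN : (((fromBlocks 0 (-1) 1 0 : Matrix (Fin n ⊕ Fin n) (Fin n ⊕ Fin n) ℝ) *
      fromBlocks P⁻¹ (-(P⁻¹ * Q)) (-(Qᵀ * P⁻¹)) (Qᵀ * P⁻¹ * Q - lam • P)).map Complex.ofReal) +
      (a : ℂ) • Complex.I • (1 : Matrix (Fin n ⊕ Fin n) (Fin n ⊕ Fin n) ℂ) =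
      fromBlocks (qt * pinv + c • 1) ((lam : ℂ) • p - qt * (pinv * q)) pinv
        (-(pinv * q) + c • 1) := by
    rw [hJB, smul_smul, ← hcdef, ← Matrix.fromBlocks_one, Matrix.fromBlocks_map,
      Matrix.fromBlocks_smul, Matrix.fromBlocks_add]
    simp only [smul_zero, add_zero, mapC_mul, mapC_sub, mapC_smul, mapC_neg, Matrix.mul_assoc]
    rfl
  rw [hN]
  -- swap matrix
  set σ : Matrix (Fin n ⊕ Fin n) (Fin n ⊕ Fin n) ℂ := fromBlocks 0 1 1 0 with hσ
  have hσσ : σ * σ = 1 := by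
    rw [hσ, Matrix.fromBlocks_multiply]
    simp [Matrix.fromBlocks_one]
  have hdetσ : σ.det ≠ 0 := by
    intro h
    have := congrArg Matrix.det hσσ
    rw [Matrix.det_mul, h, mul_zero, Matrix.det_one] at this
    norm_num at this
  have hswap : σ * fromBlocks (qt * pinv + c • 1) ((lam : ℂ) • p - qt * (pinv * q)) pinv
        (-(pinv * q) + c • 1) =
      fromBlocks pinv (-(pinv * q) + c • 1) (qt * pinv + c • 1)
        ((lam : ℂ) • p - qt * (pinv * q)) := by
    rw [hσ, Matrix.fromBlocks_multiply]
    simp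
  haveI : Invertible pinv := ⟨p, hppinv, hpinvp⟩
  have hdet2 : (fromBlocks pinv (-(pinv * q) + c • 1) (qt * pinv + c • 1)
        ((lam : ℂ) • p - qt * (pinv * q))).det =
      pinv.det * ((lam : ℂ) • p - qt * (pinv * q) -
        (qt * pinv + c • 1) * p * (-(pinv * q) + c • 1)).det := by
    rw [Matrix.det_fromBlocks₁₁, invOf_eq_right_inv hpinvp]
  -- Schur complement equals the matrix from part 1 at -a
  have hcc : c * c = -((a:ℂ)^2) := by
    rw [hcdef, mul_mul_mul_comm, Complex.I_mul_I]; ring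
  have hschur : (lam : ℂ) • p - qt * (pinv * q) -
      (qt * pinv + c • 1) * p * (-(pinv * q) + c • 1) =
      ((-a : ℝ) : ℂ) ^ 2 • p + ((-a : ℝ) : ℂ) • Complex.I • ((Qᵀ - Q).map Complex.ofReal) +
        (lam : ℂ) • p := by
    have e1 : (qt * pinv + c • 1) * p = qt + c • p := by
      rw [Matrix.add_mul, Matrix.smul_mul, Matrix.one_mul, Matrix.mul_assoc, hpinvp,
        Matrix.mul_one]
    have e2 : p * (pinv * q) = q := by
      rw [← Matrix.mul_assoc, hppinv, Matrix.one_mul]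
    rw [e1]
    simp only [Matrix.add_mul, Matrix.mul_add, Matrix.mul_neg, Matrix.neg_mul,
      Matrix.mul_smul, Matrix.smul_mul, Matrix.mul_one, Matrix.one_mul, smul_neg,
      smul_smul, e2, hcc, mapC_sub, ← hq, ← hqt]
    push_cast
    match_scalars
    · linear_combination (-1 : ℂ) * hcc
    · ring
    · linear_combination hcdef
    · linear_combination (-1 : ℂ) * hcdef
  have hM' : (((-a : ℝ) : ℂ) ^ 2 • p + ((-a : ℝ) : ℂ) • Complex.I • ((Qᵀ - Q).map Complex.ofReal) +
      (lam : ℂ) • p).det ≠ 0 :=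
    ((Matrix.isUnit_iff_isUnit_det _).mp (part1 (-a))).ne_zero
  have hpinvdet : pinv.det ≠ 0 :=
    ((Matrix.isUnit_iff_isUnit_det _).mp (isUnit_of_invertible pinv)).ne_zero
  have hdetF : σ.det * (fromBlocks (qt * pinv + c • 1) ((lam : ℂ) • p - qt * (pinv * q)) pinv
      (-(pinv * q) + c • 1)).det =
      pinv.det * (((-a : ℝ) : ℂ) ^ 2 • p + ((-a : ℝ) : ℂ) • Complex.I •
        ((Qᵀ - Q).map Complex.ofReal) + (lam : ℂ) • p).det := by
    rw [← Matrix.det_mul, hswap, hdet2, hschur]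
  intro h0
  rw [h0, mul_zero] at hdetF
  exact (mul_ne_zero hpinvdet hM') hdetF.symm
end

section
/- Let $(\mathbb{R}^{2n}, \omega)$ be the standard symplectic space with $\omega(u,v) = \langle Ju, v\rangle$, $J = \begin{bmatrix} 0 & -I \\ I & 0 \end{bmatrix}$. Let $P$ be a real symmetric positive definite $n\times n$ matrix, $Q$ arbitrary, $R$ symmetric, and let $B = \begin{bmatrix} P^{-1} & -P^{-1}Q \\ -Q^T P^{-1} & Q^T P^{-1} Q - R \end{bmatrix}$. Let $V \subseteq \mathbb{R}^{2n}$ be any subspace invariant under $JB$ that is isotropic for $\omega$ (e.g. a Lagrangian spectral subspace of the hyperbolic matrix $JB$). Then $V \cap L_D = \{0\}$, where $L_D = \mathbb{R}^n \times \{0\}$ is the horizontal (Dirichlet) Lagrangian. -/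
open Matrix

/-- Any isotropic subspace `V` invariant under `JB` is transversal to the Dirichlet
Lagrangian `L_D = ℝⁿ × {0}`. -/
theorem stmt9 (n : ℕ) (P Q R : Matrix (Fin n) (Fin n) ℝ)
    (hP : P.PosDef) (hR : R.IsSymm)
    (V : Submodule ℝ ((Fin n ⊕ Fin n) → ℝ))
    (hinv : ∀ x ∈ V,
      (((fromBlocks 0 (-1) 1 0 : Matrix (Fin n ⊕ Fin n) (Fin n ⊕ Fin n) ℝ) *
        fromBlocks P⁻¹ (-(P⁻¹ * Q)) (-(Qᵀ * P⁻¹)) (Qᵀ * P⁻¹ * Q - R)).mulVec x) ∈ V)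
    (hiso : ∀ x ∈ V, ∀ y ∈ V,
      ((fromBlocks 0 (-1) 1 0 : Matrix (Fin n ⊕ Fin n) (Fin n ⊕ Fin n) ℝ).mulVec x) ⬝ᵥ y = 0) :
    ∀ z ∈ V, (∀ i, z (Sum.inr i) = 0) → z = 0 := by
  intro z hz hz0
  set J : Matrix (Fin n ⊕ Fin n) (Fin n ⊕ Fin n) ℝ := fromBlocks 0 (-1) 1 0 with hJ
  set B : Matrix (Fin n ⊕ Fin n) (Fin n ⊕ Fin n) ℝ :=
    fromBlocks P⁻¹ (-(P⁻¹ * Q)) (-(Qᵀ * P⁻¹)) (Qᵀ * P⁻¹ * Q - R) with hB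
  have h1 := hiso _ (hinv z hz) z hz
  have hJJ : J * J = -1 := by
    rw [hJ, fromBlocks_multiply]
    simp [← fromBlocks_one, fromBlocks_neg]
  rw [mulVec_mulVec, ← mul_assoc, hJJ, neg_one_mul, neg_mulVec, neg_dotProduct,
    neg_eq_zero] at h1
  -- h1 : B.mulVec z ⬝ᵥ z = 0
  have key : (P⁻¹ *ᵥ (z ∘ Sum.inl)) ⬝ᵥ (z ∘ Sum.inl) = 0 := by
    have hz2 : z ∘ Sum.inr = 0 := funext hz0
    rw [hB, fromBlocks_mulVec, hz2] at h1
    simpa [dotProduct_block, hz2] using h1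
  have hu : z ∘ Sum.inl = 0 := by
    by_contra hu
    have := hP.inv.dotProduct_mulVec_pos (x := z ∘ Sum.inl) hu
    rw [dotProduct_comm] at key
    simp [key] at this
  funext i
  cases i with
  | inl i => exact congrFun hu i
  | inr i => exact hz0 i
end

section
/- In the standard symplectic space $(\mathbb{R}^{2n},\omega)$, let $\alpha, \beta, \delta$ be three Lagrangian subspaces. Define the bilinear form $\mathfrak{Q}(\alpha,\beta;\delta)$ on $\alpha \cap (\beta + \delta)$ by $\mathfrak{Q}(x_1, x_2) = \omega(y_1, z_2)$, where $x_j = y_j + z_j$ with $y_j \in \beta$, $z_j \in \delta$ (any such decomposition). Then the kernel of $\mathfrak{Q}(\alpha,\beta;\delta)$ equals $\alpha\cap\beta + \alpha\cap\delta$. -/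
open Matrix

/-- The standard symplectic matrix `J` on `ℝ²ⁿ`. -/
def sympJ (n : ℕ) : Matrix (Fin n ⊕ Fin n) (Fin n ⊕ Fin n) ℝ :=
  Matrix.fromBlocks 0 (-1) 1 0

/-- The standard symplectic form `ω(x, y) = ⟨Jx, y⟩`. -/
def omegaJ (n : ℕ) (x y : (Fin n ⊕ Fin n) → ℝ) : ℝ :=
  ((sympJ n).mulVec x) ⬝ᵥ y

/-- A Lagrangian subspace: isotropic of dimension `n`. -/
def IsLagrangian (n : ℕ) (L : Submodule ℝ ((Fin n ⊕ Fin n) → ℝ)) : Prop :=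
  (∀ x ∈ L, ∀ y ∈ L, omegaJ n x y = 0) ∧ Module.finrank ℝ L = n

lemma omegaJ_add_left (n : ℕ) (a b c : (Fin n ⊕ Fin n) → ℝ) :
    omegaJ n (a + b) c = omegaJ n a c + omegaJ n b c := by
  simp [omegaJ, Matrix.mulVec_add, add_dotProduct]

lemma omegaJ_sub_left (n : ℕ) (a b c : (Fin n ⊕ Fin n) → ℝ) :
    omegaJ n (a - b) c = omegaJ n a c - omegaJ n b c := by
  simp [omegaJ, Matrix.mulVec_sub, sub_dotProduct]

lemma omegaJ_add_right (n : ℕ) (a b c : (Fin n ⊕ Fin n) → ℝ) :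
    omegaJ n a (b + c) = omegaJ n a b + omegaJ n a c := by
  simp [omegaJ, dotProduct_add]

lemma omegaJ_sub_right (n : ℕ) (a b c : (Fin n ⊕ Fin n) → ℝ) :
    omegaJ n a (b - c) = omegaJ n a b - omegaJ n a c := by
  simp [omegaJ, dotProduct_sub]

lemma sympJ_eq (n : ℕ) : sympJ n = Matrix.J (Fin n) ℝ := rfl

lemma sympJ_transpose (n : ℕ) : (sympJ n)ᵀ = -sympJ n := by
  rw [sympJ_eq, Matrix.J_transpose]

lemma omegaJ_self (n : ℕ) (x : (Fin n ⊕ Fin n) → ℝ) : omegaJ n x x = 0 := by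
  have h : omegaJ n x x = - omegaJ n x x := by
    conv_lhs => rw [omegaJ, dotProduct_comm, dotProduct_mulVec, ← mulVec_transpose,
      sympJ_transpose, Matrix.neg_mulVec, neg_dotProduct]
    rfl
  linarith

lemma omegaJ_skew (n : ℕ) (x y : (Fin n ⊕ Fin n) → ℝ) : omegaJ n x y = - omegaJ n y x := by
  have := omegaJ_self n (x + y)
  rw [omegaJ_add_left, omegaJ_add_right, omegaJ_add_right, omegaJ_self, omegaJ_self] at this
  linarith

lemma omegaJ_nondeg (n : ℕ) (x : (Fin n ⊕ Fin n) → ℝ)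
    (h : ∀ y, omegaJ n x y = 0) : x = 0 := by
  have hJx : (sympJ n).mulVec x = 0 := by
    ext j
    have := h (Pi.single j 1)
    simpa [omegaJ, dotProduct, Pi.single_apply, mul_ite] using this
  have h2 : (sympJ n * sympJ n).mulVec x = 0 := by
    rw [← Matrix.mulVec_mulVec, hJx, Matrix.mulVec_zero]
  rw [sympJ_eq, Matrix.J_squared, Matrix.neg_mulVec, Matrix.one_mulVec] at h2
  simpa [neg_eq_zero] using h2


noncomputable def Bform (n : ℕ) : LinearMap.BilinForm ℝ ((Fin n ⊕ Fin n) → ℝ) :=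
  LinearMap.mk₂ ℝ (omegaJ n)
    (fun a b c => omegaJ_add_left n a b c)
    (fun r a c => by simp [omegaJ, Matrix.mulVec_smul, smul_dotProduct])
    (fun a b c => omegaJ_add_right n a b c)
    (fun r a c => by simp [omegaJ, dotProduct_smul])

@[simp] lemma Bform_apply (n : ℕ) (x y : (Fin n ⊕ Fin n) → ℝ) :
    Bform n x y = omegaJ n x y := rfl

lemma Bform_refl (n : ℕ) : (Bform n).IsRefl := by
  intro x y h
  simp only [Bform_apply] at h ⊢
  rw [omegaJ_skew, h, neg_zero]

lemma Bform_nondeg (n : ℕ) : (Bform n).Nondegenerate := by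
  refine (LinearMap.IsRefl.nondegenerate_iff_separatingLeft (Bform_refl n)).mpr ?_
  intro x hx
  exact omegaJ_nondeg n x fun y => hx y

lemma finrank_V (n : ℕ) : Module.finrank ℝ ((Fin n ⊕ Fin n) → ℝ) = n + n := by
  simp [Module.finrank_pi]

lemma lagr_orth {n : ℕ} {L : Submodule ℝ ((Fin n ⊕ Fin n) → ℝ)} (hL : IsLagrangian n L) :
    (Bform n).orthogonal L = L := by
  have hle : L ≤ (Bform n).orthogonal L := by
    intro x hx
    rw [LinearMap.BilinForm.mem_orthogonal_iff]
    intro m hm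
    exact hL.1 m hm x hx
  refine (Submodule.eq_of_le_of_finrank_le hle ?_).symm
  rw [LinearMap.BilinForm.finrank_orthogonal (Bform_nondeg n), finrank_V, hL.2]
  omega

lemma orth_sup (n : ℕ) (X Y : Submodule ℝ ((Fin n ⊕ Fin n) → ℝ)) :
    (Bform n).orthogonal (X ⊔ Y) = (Bform n).orthogonal X ⊓ (Bform n).orthogonal Y := by
  ext m
  simp only [Submodule.mem_inf, LinearMap.BilinForm.mem_orthogonal_iff]
  constructor
  · intro h
    exact ⟨fun a ha => h a (Submodule.mem_sup_left ha),
      fun b hb => h b (Submodule.mem_sup_right hb)⟩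
  · rintro ⟨h1, h2⟩ w hw
    obtain ⟨a, ha, b, hb, rfl⟩ := Submodule.mem_sup.1 hw
    have e1 := h1 a ha
    have e2 := h2 b hb
    simp only [LinearMap.BilinForm.IsOrtho, Bform_apply] at e1 e2 ⊢
    rw [omegaJ_add_left, e1, e2, add_zero]

lemma orth_key (n : ℕ) (α β δ : Submodule ℝ ((Fin n ⊕ Fin n) → ℝ))
    (hα : IsLagrangian n α) (hβ : IsLagrangian n β) (hδ : IsLagrangian n δ) :
    (Bform n).orthogonal (α ⊓ (β ⊔ δ)) = α ⊔ (β ⊓ δ) := by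
  have hinf : (Bform n).orthogonal (β ⊓ δ) = β ⊔ δ := by
    conv_lhs => rw [← lagr_orth hβ, ← lagr_orth hδ, ← orth_sup]
    exact LinearMap.BilinForm.orthogonal_orthogonal (Bform_nondeg n) (Bform_refl n) _
  have h1 : (Bform n).orthogonal (α ⊔ (β ⊓ δ)) = α ⊓ (β ⊔ δ) := by
    rw [orth_sup, lagr_orth hα, hinf]
  rw [← h1]
  exact LinearMap.BilinForm.orthogonal_orthogonal (Bform_nondeg n) (Bform_refl n) _

/-- The kernel of the form `𝔔(α,β;δ)(x₁,x₂) = ω(y₁,z₂)` (for decompositions `xⱼ = yⱼ + zⱼ`,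
`yⱼ ∈ β`, `zⱼ ∈ δ`) on `α ∩ (β + δ)` equals `α∩β + α∩δ`. -/
theorem stmt11 (n : ℕ) (α β δ : Submodule ℝ ((Fin n ⊕ Fin n) → ℝ))
    (hα : IsLagrangian n α) (hβ : IsLagrangian n β) (hδ : IsLagrangian n δ) :
    ∀ x ∈ α ⊓ (β ⊔ δ),
      (x ∈ (α ⊓ β) ⊔ (α ⊓ δ) ↔
        ∀ x' ∈ α ⊓ (β ⊔ δ), ∀ y ∈ β, ∀ z ∈ δ, ∀ y' ∈ β, ∀ z' ∈ δ,
          x = y + z → x' = y' + z' → omegaJ n y z' = 0) := by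
  intro x hx
  obtain ⟨hxα, hxβδ⟩ := Submodule.mem_inf.1 hx
  constructor
  · -- forward
    intro hmem x' hx' y hy z hz y' hy' z' hz' hxyz hx'yz
    obtain ⟨u, hu, v, hv, huv⟩ := Submodule.mem_sup.1 hmem
    obtain ⟨hx'α, _⟩ := Submodule.mem_inf.1 hx'
    have ey : y = x - z := by rw [hxyz]; abel
    have ez' : z' = x' - y' := by rw [hx'yz]; abel
    have key1 : omegaJ n x x' = 0 := hα.1 x hxα x' hx'α
    have key2 : omegaJ n z z' = 0 := hδ.1 z hz z' hz'
    have key3 : omegaJ n u y' = 0 := hβ.1 u hu.2 y' hy'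
    have key4 : omegaJ n v x' = 0 := hα.1 v hv.1 x' hx'α
    have key5 : omegaJ n v z' = 0 := hδ.1 v hv.2 z' hz'
    have evy' : omegaJ n v y' = 0 := by
      have : y' = x' - z' := by rw [hx'yz]; abel
      rw [this, omegaJ_sub_right, key4, key5, sub_zero]
    have exy' : omegaJ n x y' = 0 := by
      rw [← huv, omegaJ_add_left, key3, evy', add_zero]
    have exz' : omegaJ n x z' = 0 := by
      rw [ez', omegaJ_sub_right, key1, exy', sub_zero]
    rw [ey, omegaJ_sub_left, exz', key2, sub_zero]
  · -- backward
    intro h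
    obtain ⟨y, hy, z, hz, hyz⟩ := Submodule.mem_sup.1 hxβδ
    have hyorth : y ∈ (Bform n).orthogonal (α ⊓ (β ⊔ δ)) := by
      rw [LinearMap.BilinForm.mem_orthogonal_iff]
      intro x' hx'
      obtain ⟨hx'α, hx'βδ⟩ := Submodule.mem_inf.1 hx'
      obtain ⟨y', hy', z', hz', hy'z'⟩ := Submodule.mem_sup.1 hx'βδ
      have h1 : omegaJ n y z' = 0 :=
        h x' hx' y hy z hz y' hy' z' hz' hyz.symm hy'z'.symm
      have h2 : omegaJ n y y' = 0 := hβ.1 y hy y' hy'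
      have h3 : omegaJ n y x' = 0 := by
        rw [← hy'z', omegaJ_add_right, h1, h2, add_zero]
      show Bform n x' y = 0
      simp only [Bform_apply]
      rw [omegaJ_skew, h3, neg_zero]
    rw [orth_key n α β δ hα hβ hδ] at hyorth
    obtain ⟨a, ha, w, hw, haw⟩ := Submodule.mem_sup.1 hyorth
    refine Submodule.mem_sup.2 ⟨y - w, ?_, z + w, ?_, by rw [← hyz]; abel⟩
    · refine Submodule.mem_inf.2 ⟨?_, ?_⟩
      · have : y - w = a := by rw [← haw]; abel
        rw [this]; exact ha
      · exact Submodule.sub_mem β hy hw.1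
    · refine Submodule.mem_inf.2 ⟨?_, Submodule.add_mem δ hz hw.2⟩
      have : z + w = x - (y - w) := by rw [← hyz]; abel
      rw [this]
      exact Submodule.sub_mem α hxα (by
        have : y - w = a := by rw [← haw]; abel
        rw [this]; exact ha)
end
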